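/- Let b, b₁, …, b_m be real numbers with m ≥ 1. If 2/(r−b) = ∑_{p=1}^m 1/(r−b_p) for all r in some nonempty open interval avoiding all of these numbers, then m = 2 and b₁ = b₂ = b. -/

import Mathlib

open Polynomial Finset

/-- If 2/(r−b) = ∑ₚ 1/(r−bₚ) on a nonempty open interval (away from the poles), then m = 2
and b₁ = b₂ = b. -/
theorem stmt14 {m : ℕ} (hm : 1 ≤ m) (b : ℝ) (bp : Fin m → ℝ) (s t : ℝ) (hst : s < t)
    (h : ∀ r ∈ Set.Ioo s t, r ≠ b → (∀ p, r ≠ bp p) →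
      2 / (r - b) = ∑ p, 1 / (r - bp p)) :
    m = 2 ∧ ∀ p, bp p = b := by
  classical
  set P : Polynomial ℝ := C 2 * ∏ p, (X - C (bp p)) with hP
  set S : Polynomial ℝ := ∑ p, ∏ q ∈ Finset.univ.erase p, (X - C (bp q)) with hS
  set Q : Polynomial ℝ := (X - C b) * S with hQ
  have hPQ : P = Q := by
    apply Polynomial.eq_of_infinite_eval_eq
    have hinf : (Set.Ioo s t \ ({b} ∪ Set.range bp)).Infinite :=
      (Set.Ioo_infinite hst).diff ((Set.finite_singleton b).union (Set.finite_range bp))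
    apply hinf.mono
    rintro r ⟨hr, hr2⟩
    simp only [Set.mem_union, Set.mem_singleton_iff, Set.mem_range, not_or, not_exists] at hr2
    obtain ⟨hrb, hrbp⟩ := hr2
    have hrbp' : ∀ p, r ≠ bp p := fun p hp => hrbp p hp.symm
    have heq := h r hr hrb hrbp'
    have hb0 : r - b ≠ 0 := sub_ne_zero.2 hrb
    have hp0 : ∀ p, r - bp p ≠ 0 := fun p => sub_ne_zero.2 (hrbp' p)
    have key : (r - b) * ∑ p, ∏ q ∈ Finset.univ.erase p, (r - bp q)
        = 2 * ∏ p, (r - bp p) := by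
      have h1 : ∀ p : Fin m, ∏ q ∈ Finset.univ.erase p, (r - bp q)
          = (∏ q, (r - bp q)) * (1 / (r - bp p)) := by
        intro p
        rw [eq_comm, mul_one_div, div_eq_iff (hp0 p), mul_comm]
        exact (Finset.mul_prod_erase Finset.univ _ (Finset.mem_univ p)).symm
      calc (r - b) * ∑ p, ∏ q ∈ Finset.univ.erase p, (r - bp q)
          = (r - b) * ∑ p, (∏ q, (r - bp q)) * (1 / (r - bp p)) := by
            rw [Finset.sum_congr rfl fun p _ => h1 p]
        _ = (r - b) * ((∏ q, (r - bp q)) * ∑ p, 1 / (r - bp p)) := by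
            simp only [Finset.mul_sum]
        _ = (r - b) * ((∏ q, (r - bp q)) * (2 / (r - b))) := by rw [← heq]
        _ = 2 * ∏ p, (r - bp p) := by field_simp
    simp only [Set.mem_setOf_eq, hP, hQ, hS, eval_mul, eval_prod, eval_finset_sum,
      eval_sub, eval_X, eval_C]
    exact key.symm
  -- m = 2 by comparing coefficients of degree m
  have hmono : ∀ p : Fin m, (X - C (bp p)).Monic := fun p => monic_X_sub_C _
  have hPi : (∏ p, (X - C (bp p))).Monic := monic_prod_of_monic _ _ fun p _ => hmono p
  have hPideg : (∏ p, (X - C (bp p))).natDegree = m := by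
    rw [natDegree_prod _ _ fun p _ => (hmono p).ne_zero]
    simp [natDegree_X_sub_C]
  have hPm : P.coeff m = 2 := by
    rw [hP, coeff_C_mul]
    have := hPi.coeff_natDegree
    rw [hPideg] at this
    rw [this]; ring
  have hSmono : ∀ p : Fin m, (∏ q ∈ Finset.univ.erase p, (X - C (bp q))).Monic :=
    fun p => monic_prod_of_monic _ _ fun q _ => hmono q
  have hSdeg : ∀ p : Fin m, (∏ q ∈ Finset.univ.erase p, (X - C (bp q))).natDegree = m - 1 := by
    intro p
    rw [natDegree_prod _ _ fun q _ => (hmono q).ne_zero]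
    simp [natDegree_X_sub_C, Finset.card_erase_of_mem]
  have hScoeff : S.coeff (m - 1) = (m : ℝ) := by
    rw [hS, finset_sum_coeff]
    have : ∀ p : Fin m, (∏ q ∈ Finset.univ.erase p, (X - C (bp q))).coeff (m - 1) = 1 := by
      intro p
      have := (hSmono p).coeff_natDegree
      rwa [hSdeg p] at this
    rw [Finset.sum_congr rfl fun p _ => this p]
    simp
  have hScoeffm : S.coeff m = 0 := by
    apply coeff_eq_zero_of_natDegree_lt
    calc S.natDegree ≤ m - 1 := by
          apply natDegree_sum_le_of_forall_le
          intro p _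
          rw [hSdeg p]
      _ < m := Nat.sub_lt (Nat.lt_of_lt_of_le Nat.zero_lt_one hm) Nat.one_pos
  have hQm : Q.coeff m = (m : ℝ) := by
    rw [hQ, sub_mul, coeff_sub, coeff_C_mul]
    have hm1 : m = (m - 1) + 1 := (Nat.succ_pred_eq_of_pos (Nat.lt_of_lt_of_le Nat.zero_lt_one hm)).symm
    rw [hm1, coeff_X_mul, ← hm1, hScoeff, hScoeffm]
    ring
  have hm2R : (2 : ℝ) = (m : ℝ) := by rw [← hPm, ← hQm, hPQ]
  have hm2 : m = 2 := by exact_mod_cast hm2R.symm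
  refine ⟨hm2, ?_⟩
  -- now evaluate the polynomial identity
  subst hm2
  have hev : ∀ r : ℝ, 2 * ((r - bp 0) * (r - bp 1)) = (r - b) * ((r - bp 1) + (r - bp 0)) := by
    intro r
    have := congrArg (eval r) hPQ
    simp only [hP, hQ, hS, eval_mul, eval_prod, eval_finset_sum, eval_sub, eval_X, eval_C] at this
    have e0 : (Finset.univ.erase (0 : Fin 2)) = {1} := by decide
    have e1 : (Finset.univ.erase (1 : Fin 2)) = {0} := by decide
    rw [Fin.prod_univ_two, Fin.sum_univ_two, e0, e1] at this
    simpa using this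
  have hb' := hev b
  have h0 := hev (bp 0)
  have h1 := hev (bp 1)
  have hcase : bp 0 = b ∨ bp 1 = b := by
    rcases mul_eq_zero.1 (by nlinarith : (b - bp 0) * (b - bp 1) = 0) with h' | h'
    · left; linarith
    · right; linarith
  intro p
  have : bp 0 = b ∧ bp 1 = b := by
    rcases hcase with h' | h'
    · constructor
      · exact h'
      · nlinarith
    · constructor
      · nlinarith
      · exact h'
  fin_cases p
  · exact this.1
  · exact this.2
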